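/- Let β ∈ ℂ with Re(β) > 0, ε > 0, k ∈ ℕ, and R > exp^∘k(0) with M_{ε,k}(R) < Re(β). Let D ⊆ ℂ satisfy Re(ζ) ≥ R for all ζ ∈ D, and let f : D → D satisfy |f(ζ) − (ζ + β)| ≤ M_{ε,k}(Re(ζ)) for all ζ ∈ D. Set ρ := Re(β) − M_{ε,k}(R). Then for every ζ ∈ D the limit φ(ζ) := lim_{n→∞} (f^∘n(ζ) − n·β) exists, and for every ν with 0 < ν < ε the series C_ν := Σ_{n=0}^{∞} M_{ν,k}(R + n·ρ) converges and |φ(ζ) − ζ| ≤ C_ν · (log^∘k(Re(ζ)))^{−(ε−ν)} for all ζ ∈ D. In particular, φ(ζ) − ζ → 0 uniformly on D as Re(ζ) → +∞. -/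

import Mathlib

open Filter Set

noncomputable def Pfun (k : ℕ) (x : ℝ) : ℝ := ∏ j ∈ Finset.range k, Real.log^[j] x

lemma Pfun_succ (k : ℕ) (x : ℝ) : Pfun (k+1) x = Pfun k (Real.log x) * x := by
  simp only [Pfun, Finset.prod_range_succ']
  simp [Function.iterate_succ_apply]

lemma exp_iter_pos (k : ℕ) : 0 < Real.exp^[k] 0 ∨ Real.exp^[k] 0 = 0 := by
  cases k with
  | zero => right; rfl
  | succ n => left; rw [Function.iterate_succ_apply']; exact Real.exp_pos _

lemma log_gt_of_gt (k : ℕ) (x : ℝ) (hx : Real.exp^[k+1] 0 < x) : Real.exp^[k] 0 < Real.log x := by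
  rw [Function.iterate_succ_apply'] at hx
  have h0 : (0:ℝ) < Real.exp (Real.exp^[k] 0) := Real.exp_pos _
  calc Real.exp^[k] 0 = Real.log (Real.exp (Real.exp^[k] 0)) := (Real.log_exp _).symm
    _ < Real.log x := Real.log_lt_log h0 hx

lemma x_pos_of_gt (k : ℕ) (x : ℝ) (hx : Real.exp^[k] 0 < x) : 0 ≤ x := by
  rcases exp_iter_pos k with h | h
  · exact le_of_lt (h.trans hx)
  · rw [h] at hx; exact le_of_lt hx

lemma iterlog_pos : ∀ (k : ℕ) (x : ℝ), Real.exp^[k] 0 < x → 0 < Real.log^[k] x := by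
  intro k
  induction k with
  | zero => intro x hx; exact hx
  | succ n ih =>
    intro x hx
    rw [Function.iterate_succ_apply]
    exact ih _ (log_gt_of_gt n x hx)

lemma iterlog_mono : ∀ (k : ℕ) (x y : ℝ), Real.exp^[k] 0 < x → x ≤ y → Real.log^[k] x ≤ Real.log^[k] y := by
  intro k
  induction k with
  | zero => intro x y _ h; exact h
  | succ n ih =>
    intro x y hx hxy
    rw [Function.iterate_succ_apply, Function.iterate_succ_apply]
    have hx0 : 0 < x := by
      rw [Function.iterate_succ_apply'] at hx
      exact (Real.exp_pos _).trans hx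
    exact ih _ _ (log_gt_of_gt n x hx) (Real.log_le_log hx0 hxy)

lemma Pfun_pos : ∀ (k : ℕ) (x : ℝ), Real.exp^[k] 0 < x → 0 < Pfun k x := by
  intro k
  induction k with
  | zero => intro x _; simp [Pfun]
  | succ n ih =>
    intro x hx
    have hx0 : 0 < x := by
      rw [Function.iterate_succ_apply'] at hx
      exact (Real.exp_pos _).trans hx
    rw [Pfun_succ]
    exact mul_pos (ih _ (log_gt_of_gt n x hx)) hx0

lemma Pfun_mono : ∀ (k : ℕ) (x y : ℝ), Real.exp^[k] 0 < x → x ≤ y → Pfun k x ≤ Pfun k y := by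
  intro k
  induction k with
  | zero => intro x y _ _; simp [Pfun]
  | succ n ih =>
    intro x y hx hxy
    have hx0 : 0 < x := by
      rw [Function.iterate_succ_apply'] at hx
      exact (Real.exp_pos _).trans hx
    rw [Pfun_succ, Pfun_succ]
    have h1 := ih _ _ (log_gt_of_gt n x hx) (Real.log_le_log hx0 hxy)
    exact mul_le_mul h1 hxy (le_of_lt hx0) (le_of_lt (Pfun_pos n _ ((log_gt_of_gt n x hx).trans_le (Real.log_le_log hx0 hxy))))

/-- `M_{ε,k}(x) = (∏_{j=0}^{k-1} log^∘j(x))⁻¹ · (log^∘k(x))^{-(1+ε)}`. -/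
noncomputable def Mfun (ε : ℝ) (k : ℕ) (x : ℝ) : ℝ :=
  (∏ j ∈ Finset.range k, Real.log^[j] x)⁻¹ * (Real.log^[k] x) ^ (-(1 + ε))

lemma Mfun_eq (ε : ℝ) (k : ℕ) (x : ℝ) : Mfun ε k x = (Pfun k x)⁻¹ * (Real.log^[k] x) ^ (-(1 + ε)) := rfl

lemma Mfun_pos (ε : ℝ) (k : ℕ) (x : ℝ) (hx : Real.exp^[k] 0 < x) : 0 < Mfun ε k x := by
  rw [Mfun_eq]
  exact mul_pos (inv_pos.2 (Pfun_pos k x hx)) (Real.rpow_pos_of_pos (iterlog_pos k x hx) _)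

lemma Mfun_anti (ε : ℝ) (hε : 0 ≤ ε) (k : ℕ) (x y : ℝ) (hx : Real.exp^[k] 0 < x) (hxy : x ≤ y) :
    Mfun ε k y ≤ Mfun ε k x := by
  rw [Mfun_eq, Mfun_eq]
  have h1 : (Pfun k y)⁻¹ ≤ (Pfun k x)⁻¹ :=
    inv_anti₀ (Pfun_pos k x hx) (Pfun_mono k x y hx hxy)
  have h2 : (Real.log^[k] y) ^ (-(1+ε)) ≤ (Real.log^[k] x) ^ (-(1+ε)) :=
    Real.rpow_le_rpow_of_nonpos (iterlog_pos k x hx) (iterlog_mono k x y hx hxy)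
      (by linarith)
  exact mul_le_mul h1 h2 (Real.rpow_nonneg (le_of_lt (iterlog_pos k y (hx.trans_le hxy))) _)
    (le_of_lt (inv_pos.2 (Pfun_pos k x hx)))

lemma hasDerivAt_iterlog : ∀ (k : ℕ) (x : ℝ), Real.exp^[k] 0 < x →
    HasDerivAt (Real.log^[k]) (Pfun k x)⁻¹ x := by
  intro k
  induction k with
  | zero => intro x _; simpa [Pfun] using (hasDerivAt_id x)
  | succ n ih =>
    intro x hx
    have hx0 : 0 < x := by
      rw [Function.iterate_succ_apply'] at hx
      exact (Real.exp_pos _).trans hx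
    have h1 : HasDerivAt Real.log x⁻¹ x := Real.hasDerivAt_log (ne_of_gt hx0)
    have h2 := (ih (Real.log x) (log_gt_of_gt n x hx)).comp x h1
    rw [Function.iterate_succ]
    rw [Pfun_succ, mul_inv]
    exact h2

lemma hasDerivAt_g (ν : ℝ) (k : ℕ) (x : ℝ) (hx : Real.exp^[k] 0 < x) :
    HasDerivAt (fun y => (Real.log^[k] y) ^ (-ν)) (-(ν * Mfun ν k x)) x := by
  have h := (hasDerivAt_iterlog k x hx).rpow_const (p := -ν)
    (Or.inl (ne_of_gt (iterlog_pos k x hx)))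
  convert h using 1
  rw [Mfun_eq]
  have h1 : -(1 + ν) = -ν - 1 := by ring
  rw [h1]
  ring

lemma Mfun_le_slope (ν : ℝ) (hν : 0 < ν) (k : ℕ) (a b : ℝ)
    (ha : Real.exp^[k] 0 < a) (hab : a < b) :
    Mfun ν k b ≤ ((Real.log^[k] a) ^ (-ν) - (Real.log^[k] b) ^ (-ν)) / ((b - a) * ν) := by
  set g : ℝ → ℝ := fun y => (Real.log^[k] y) ^ (-ν) with hg
  have hderiv : ∀ x ∈ Set.Ioo a b, HasDerivAt g (-(ν * Mfun ν k x)) x :=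
    fun x hx => hasDerivAt_g ν k x (ha.trans hx.1)
  have hcont : ContinuousOn g (Set.Icc a b) := fun x hx =>
    ((hasDerivAt_g ν k x (ha.trans_le hx.1)).continuousAt).continuousWithinAt
  obtain ⟨c, hc, hceq⟩ := exists_hasDerivAt_eq_slope g (fun x => -(ν * Mfun ν k x)) hab hcont hderiv
  have hcb : Mfun ν k b ≤ Mfun ν k c :=
    Mfun_anti ν (le_of_lt hν) k c b (ha.trans hc.1) (le_of_lt hc.2)
  have hba : 0 < b - a := by linarith [hab]
  have : Mfun ν k c = (g a - g b) / ((b - a) * ν) := by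
    field_simp at hceq ⊢
    nlinarith [hceq]
  rw [← this]
  exact hcb

lemma summable_Mfun (ν : ℝ) (hν : 0 < ν) (k : ℕ) (R ρ : ℝ)
    (hR : Real.exp^[k] 0 < R) (hρ : 0 < ρ) :
    Summable (fun n : ℕ => Mfun ν k (R + n * ρ)) := by
  set u : ℕ → ℝ := fun n => Mfun ν k (R + n * ρ) with hu
  set g : ℕ → ℝ := fun n => (Real.log^[k] (R + n * ρ)) ^ (-ν) with hgdef
  have hRn : ∀ n : ℕ, Real.exp^[k] 0 < R + n * ρ := fun n => by
    have : (0:ℝ) ≤ n * ρ := mul_nonneg (Nat.cast_nonneg n) (le_of_lt hρ)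
    linarith
  have hun : ∀ n : ℕ, 0 ≤ u n := fun n => le_of_lt (Mfun_pos ν k _ (hRn n))
  have hstep : ∀ n : ℕ, u (n+1) ≤ (g n - g (n+1)) / (ρ * ν) := by
    intro n
    have hab : R + n * ρ < R + (n+1 : ℕ) * ρ := by
      push_cast; nlinarith
    have := Mfun_le_slope ν hν k (R + n * ρ) (R + (n+1:ℕ) * ρ) (hRn n) hab
    have hba : (R + (n+1:ℕ) * ρ) - (R + n * ρ) = ρ := by push_cast; ring
    rw [hba] at this
    exact this
  have hbound : ∀ N : ℕ, ∑ n ∈ Finset.range N, u n ≤ u 0 + g 0 / (ρ * ν) := by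
    intro N
    cases N with
    | zero =>
      simp only [Finset.range_zero, Finset.sum_empty]
      have hg0 : 0 ≤ g 0 := Real.rpow_nonneg (le_of_lt (iterlog_pos k _ (hRn 0))) _
      have : 0 ≤ g 0 / (ρ * ν) := div_nonneg hg0 (by positivity)
      linarith [hun 0]
    | succ m =>
      rw [Finset.sum_range_succ']
      have h1 : ∑ i ∈ Finset.range m, u (i+1) ≤ ∑ i ∈ Finset.range m, (g i - g (i+1)) / (ρ * ν) :=
        Finset.sum_le_sum (fun i _ => hstep i)
      have h2 : ∑ i ∈ Finset.range m, (g i - g (i+1)) / (ρ * ν)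
          = (g 0 - g m) / (ρ * ν) := by
        rw [← Finset.sum_div, Finset.sum_range_sub' g m]
      have hgm : 0 ≤ g m := Real.rpow_nonneg (le_of_lt (iterlog_pos k _ (hRn m))) _
      have h3 : (g 0 - g m) / (ρ * ν) ≤ g 0 / (ρ * ν) :=
        (div_le_div_iff_of_pos_right (by positivity)).2 (by linarith)
      linarith [h1, h2, h3]
  exact summable_of_sum_range_le hun hbound

lemma tendsto_iterlog_atTop : ∀ k : ℕ, Tendsto (Real.log^[k]) atTop atTop := by
  intro k
  induction k with
  | zero => exact tendsto_id
  | succ n ih =>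
    rw [Function.iterate_succ]
    exact ih.comp Real.tendsto_log_atTop

theorem koenigs_limit_exists_with_logarithmic_estimate
    (β : ℂ) (hβ : 0 < β.re) (ε : ℝ) (hε : 0 < ε) (k : ℕ)
    (R : ℝ) (hR : Real.exp^[k] 0 < R) (hMR : Mfun ε k R < β.re)
    (D : Set ℂ) (hDre : ∀ ζ ∈ D, R ≤ ζ.re)
    (f : ℂ → ℂ) (hinv : Set.MapsTo f D D)
    (hbound : ∀ ζ ∈ D, ‖f ζ - (ζ + β)‖ ≤ Mfun ε k ζ.re) :
    ∃ φ : ℂ → ℂ,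
      (∀ ζ ∈ D, Tendsto (fun n : ℕ => f^[n] ζ - (n : ℂ) * β) atTop (nhds (φ ζ))) ∧
      (∀ ν : ℝ, 0 < ν → ν < ε →
        ∃ Cν : ℝ, HasSum (fun n : ℕ => Mfun ν k (R + n * (β.re - Mfun ε k R))) Cν ∧
          ∀ ζ ∈ D, ‖φ ζ - ζ‖ ≤ Cν * (Real.log^[k] ζ.re) ^ (-(ε - ν))) ∧
      (∀ δ > (0 : ℝ), ∃ R' : ℝ, ∀ ζ ∈ D, R' ≤ ζ.re → ‖φ ζ - ζ‖ ≤ δ) := by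
  set ρ : ℝ := β.re - Mfun ε k R with hρdef
  have hρ : 0 < ρ := by simp only [hρdef]; linarith
  have hRn : ∀ n : ℕ, Real.exp^[k] 0 < R + n * ρ := fun n => by
    have : (0:ℝ) ≤ n * ρ := mul_nonneg (Nat.cast_nonneg n) (le_of_lt hρ)
    linarith
  -- iterates stay in D and real parts grow
  have hiter : ∀ ζ ∈ D, ∀ n : ℕ, f^[n] ζ ∈ D ∧ ζ.re + n * ρ ≤ (f^[n] ζ).re := by
    intro ζ hζ n
    induction n with
    | zero => simpa using hζ
    | succ n ih =>
      obtain ⟨hwD, hwre⟩ := ih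
      set w := f^[n] ζ with hw
      have hwR : R ≤ w.re := le_trans (by nlinarith [hDre ζ hζ, (Nat.cast_nonneg n : (0:ℝ) ≤ n)]) hwre
      have hwexp : Real.exp^[k] 0 < w.re := hR.trans_le hwR
      have hfD : f w ∈ D := hinv hwD
      have hb := hbound w hwD
      have hre1 : -(Mfun ε k w.re) ≤ (f w - (w + β)).re := by
        have := (abs_le.mp (le_trans (Complex.abs_re_le_norm _) hb)).1
        linarith
      have hre2 : (f w - (w + β)).re = (f w).re - w.re - β.re := by
        simp [Complex.sub_re, Complex.add_re]; ring
      have hM : Mfun ε k w.re ≤ Mfun ε k R := Mfun_anti ε (le_of_lt hε) k R w.re hR hwR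
      have hfre : w.re + ρ ≤ (f w).re := by
        rw [hre2] at hre1; simp only [hρdef]; linarith
      constructor
      · rw [Function.iterate_succ_apply']; exact hfD
      · rw [Function.iterate_succ_apply']
        push_cast
        calc ζ.re + (n + 1 : ℝ) * ρ = (ζ.re + n * ρ) + ρ := by ring
          _ ≤ w.re + ρ := by linarith
          _ ≤ (f w).re := hfre
  have hRiter : ∀ ζ ∈ D, ∀ n : ℕ, R + n * ρ ≤ (f^[n] ζ).re := by
    intro ζ hζ n
    have := (hiter ζ hζ n).2
    have := hDre ζ hζ
    linarith
  -- the increments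
  have hdiff : ∀ ζ : ℂ, ∀ n : ℕ,
      (f^[n+1] ζ - ((n+1 : ℕ) : ℂ) * β) - (f^[n] ζ - (n : ℂ) * β)
        = f (f^[n] ζ) - (f^[n] ζ + β) := by
    intro ζ n
    rw [Function.iterate_succ_apply']
    push_cast
    ring
  have hdist : ∀ ζ ∈ D, ∀ n : ℕ,
      dist (f^[n] ζ - (n : ℂ) * β) (f^[n+1] ζ - ((n+1 : ℕ) : ℂ) * β)
        ≤ Mfun ε k ((f^[n] ζ).re) := by
    intro ζ hζ n
    rw [dist_eq_norm, norm_sub_rev, hdiff ζ n]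
    exact hbound _ (hiter ζ hζ n).1
  have hsumε : Summable (fun n : ℕ => Mfun ε k (R + n * ρ)) :=
    summable_Mfun ε hε k R ρ hR hρ
  have hdistR : ∀ ζ ∈ D, ∀ n : ℕ,
      dist (f^[n] ζ - (n : ℂ) * β) (f^[n+1] ζ - ((n+1 : ℕ) : ℂ) * β)
        ≤ Mfun ε k (R + n * ρ) := by
    intro ζ hζ n
    exact le_trans (hdist ζ hζ n)
      (Mfun_anti ε (le_of_lt hε) k (R + n * ρ) _ (hRn n) (hRiter ζ hζ n))
  have hcauchy : ∀ ζ ∈ D, CauchySeq (fun n : ℕ => f^[n] ζ - (n : ℂ) * β) := by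
    intro ζ hζ
    exact cauchySeq_of_dist_le_of_summable _ (fun n => hdistR ζ hζ n) hsumε
  have key : ∀ ν : ℝ, 0 < ν → ν < ε → ∀ ζ ∈ D,
      ‖limUnder atTop (fun n : ℕ => f^[n] ζ - (n : ℂ) * β) - ζ‖
        ≤ (∑' n : ℕ, Mfun ν k (R + n * ρ)) * (Real.log^[k] ζ.re) ^ (-(ε - ν)) := by
    intro ν hν hνε ζ hζ
    have hζexp : Real.exp^[k] 0 < ζ.re := hR.trans_le (hDre ζ hζ)
    set Cζ := (Real.log^[k] ζ.re) ^ (-(ε - ν)) with hCζ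
    have hd : ∀ n : ℕ,
        dist (f^[n] ζ - (n : ℂ) * β) (f^[n+1] ζ - ((n+1 : ℕ) : ℂ) * β)
          ≤ Mfun ν k (R + n * ρ) * Cζ := by
      intro n
      set w := f^[n] ζ with hw
      have hwR : R ≤ w.re := by
        have := hRiter ζ hζ n
        nlinarith [(Nat.cast_nonneg n : (0:ℝ) ≤ n), hρ.le]
      have hwexp : Real.exp^[k] 0 < w.re := hR.trans_le hwR
      have hsplit : Mfun ε k w.re = Mfun ν k w.re * (Real.log^[k] w.re) ^ (-(ε - ν)) := by
        rw [Mfun_eq, Mfun_eq]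
        have he : -(1+ε) = -(1+ν) + (-(ε-ν)) := by ring
        rw [he, Real.rpow_add (iterlog_pos k _ hwexp)]
        ring
      have h1 : Mfun ν k w.re ≤ Mfun ν k (R + n * ρ) :=
        Mfun_anti ν hν.le k _ _ (hRn n) (hRiter ζ hζ n)
      have hζw : ζ.re ≤ w.re := by
        have := (hiter ζ hζ n).2
        nlinarith [(Nat.cast_nonneg n : (0:ℝ) ≤ n), hρ.le]
      have h2 : (Real.log^[k] w.re) ^ (-(ε - ν)) ≤ Cζ :=
        Real.rpow_le_rpow_of_nonpos (iterlog_pos k _ hζexp)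
          (iterlog_mono k _ _ hζexp hζw) (by linarith)
      calc dist (f^[n] ζ - (n : ℂ) * β) (f^[n+1] ζ - ((n+1 : ℕ) : ℂ) * β)
          ≤ Mfun ε k w.re := hdist ζ hζ n
        _ = Mfun ν k w.re * (Real.log^[k] w.re) ^ (-(ε - ν)) := hsplit
        _ ≤ Mfun ν k (R + n * ρ) * Cζ :=
          mul_le_mul h1 h2 (Real.rpow_nonneg (iterlog_pos k _ hwexp).le _)
            (Mfun_pos ν k _ (hRn n)).le
    have hsumd : Summable (fun n : ℕ => Mfun ν k (R + n * ρ) * Cζ) :=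
      (summable_Mfun ν hν k R ρ hR hρ).mul_right _
    have hlim := (hcauchy ζ hζ).tendsto_limUnder
    have hfinal := dist_le_tsum_of_dist_le_of_tendsto₀ _ hd hsumd hlim
    rw [tsum_mul_right] at hfinal
    simp only [Function.iterate_zero_apply, Nat.cast_zero, zero_mul, sub_zero] at hfinal
    rw [dist_eq_norm, norm_sub_rev] at hfinal
    exact hfinal
  refine ⟨fun ζ => limUnder atTop (fun n : ℕ => f^[n] ζ - (n : ℂ) * β), ?_, ?_, ?_⟩
  · intro ζ hζ
    exact (hcauchy ζ hζ).tendsto_limUnder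
  · intro ν hν hνε
    exact ⟨∑' n : ℕ, Mfun ν k (R + n * ρ), (summable_Mfun ν hν k R ρ hR hρ).hasSum,
      key ν hν hνε⟩
  · intro δ hδ
    have hν2 : (0:ℝ) < ε/2 := by linarith
    have hν2' : ε/2 < ε := by linarith
    set C := ∑' n : ℕ, Mfun (ε/2) k (R + n * ρ) with hCdef
    have htends : Tendsto (fun x : ℝ => C * (Real.log^[k] x) ^ (-(ε - ε/2))) atTop (nhds 0) := by
      have h1 := (tendsto_rpow_neg_atTop (show (0:ℝ) < ε - ε/2 by linarith)).comp
        (tendsto_iterlog_atTop k)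
      have h2 := h1.const_mul C
      simpa using h2
    have hev : ∀ᶠ x : ℝ in atTop, C * (Real.log^[k] x) ^ (-(ε - ε/2)) ≤ δ :=
      htends.eventually (eventually_le_nhds hδ)
    obtain ⟨R', hR'⟩ := eventually_atTop.1 hev
    exact ⟨R', fun ζ hζ hζR => le_trans (key (ε/2) hν2 hν2' ζ hζ) (hR' ζ.re hζR)⟩
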